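/- Let q be an odd prime power, F = GF(q), K = GF(q²), and let α, γ ∈ K be nonzero. Define the quadratic form LQ on K regarded as a 2-dimensional F-vector space by LQ(u) = Tr_{K/F}(αγu²) = αγu² + (αγu²)^q. Then LQ is of type O^+ (equivalently, there exists a nonzero u ∈ K with LQ(u) = 0) if and only if either (αγ)^{-2} lies in GF(q) but is not a square in GF(q), or there is no s ∈ GF(q)^* with (αγ)^{q+1} = −s²; and LQ is of type O^− (anisotropic) if and only if (αγ)^{-2} does not lie in GF(q)∖GF(q)^{*2} and (αγ)^{q+1} = −s² for some s ∈ GF(q)^*. -/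
import Mathlib


theorem cyc_pow_image' {G : Type*} [CommGroup G] [Fintype G] [IsCyclic G] (m : ℕ) (x : G) :
    (∃ y : G, y ^ m = x) ↔ x ^ (Fintype.card G / Nat.gcd (Fintype.card G) m) = 1 := by
  set n := Fintype.card G with hn
  have hn0 : n ≠ 0 := Fintype.card_ne_zero
  set d := Nat.gcd n m with hd
  have hdn : d ∣ n := Nat.gcd_dvd_left n m
  have hdm : d ∣ m := Nat.gcd_dvd_right n m
  have hd0 : d ≠ 0 := fun h => hn0 (Nat.gcd_eq_zero_iff.mp h).1
  constructor
  · rintro ⟨y, hy⟩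
    rw [← hy, ← pow_mul]
    obtain ⟨m', hm'⟩ := hdm
    rw [hm']
    have he : d * m' * (n / d) = n * m' := by
      rw [mul_comm d m', mul_assoc, Nat.mul_div_cancel' hdn, mul_comm]
    rw [he, pow_mul, pow_card_eq_one, one_pow]
  · intro hx
    obtain ⟨g, hg⟩ := IsCyclic.exists_generator (α := G)
    have hog : orderOf g = n := by
      rw [orderOf_eq_card_of_forall_mem_zpowers hg, Nat.card_eq_fintype_card]
    obtain ⟨k, hk⟩ := Subgroup.mem_zpowers_iff.mp (hg x)
    obtain ⟨n', hn'⟩ := hdn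
    have hn'0 : (n' : ℤ) ≠ 0 := by
      simp only [ne_eq, Nat.cast_eq_zero]
      rintro rfl
      exact hn0 (by omega)
    have hnd : n / d = n' := by rw [hn', Nat.mul_div_cancel_left _ (Nat.pos_of_ne_zero hd0)]
    have h1 : g ^ (k * (n' : ℤ)) = 1 := by
      rw [zpow_mul, hk, zpow_natCast, ← hnd, hx]
    have h2 : ((d : ℤ) * n') ∣ k * n' := by
      have := orderOf_dvd_iff_zpow_eq_one.mpr h1
      rw [hog, hn'] at this
      exact_mod_cast this
    have h3 : (d : ℤ) ∣ k := (mul_dvd_mul_iff_right hn'0).mp h2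
    obtain ⟨k', rfl⟩ := h3
    have hbez : (d : ℤ) = n * Nat.gcdA n m + m * Nat.gcdB n m := Nat.gcd_eq_gcd_ab n m
    refine ⟨g ^ (Nat.gcdB n m * k'), ?_⟩
    have hstep : (g ^ (Nat.gcdB n m * k')) ^ m = g ^ ((Nat.gcdB n m * k') * (m : ℤ)) := by
      rw [← zpow_natCast, ← zpow_mul]
    have hexp : (Nat.gcdB n m * k') * (m : ℤ)
        = (d : ℤ) * k' + (-(Nat.gcdA n m * k')) * (n : ℤ) := by
      rw [hbez]; ring
    rw [hstep, hexp, zpow_add, hk, zpow_mul, zpow_natCast, pow_card_eq_one, mul_one]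

theorem field_pow_image' {K : Type*} [Field K] [Fintype K] [DecidableEq K] (m : ℕ) {c : K}
    (hc : c ≠ 0) :
    (∃ u : K, u ≠ 0 ∧ u ^ m = c) ↔
      c ^ ((Fintype.card K - 1) / Nat.gcd (Fintype.card K - 1) m) = 1 := by
  have hcard : Fintype.card Kˣ = Fintype.card K - 1 := Fintype.card_units (α := K)
  have key := cyc_pow_image' (G := Kˣ) m (Units.mk0 c hc)
  rw [hcard] at key
  have h2 : (Units.mk0 c hc ^ ((Fintype.card K - 1) / Nat.gcd (Fintype.card K - 1) m) = 1) ↔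
      c ^ ((Fintype.card K - 1) / Nat.gcd (Fintype.card K - 1) m) = 1 := by
    rw [Units.ext_iff]; simp
  rw [← h2, ← key]
  constructor
  · rintro ⟨u, hu, huc⟩
    exact ⟨Units.mk0 u hu, by ext; simp [huc]⟩
  · rintro ⟨y, hy⟩
    exact ⟨(y : K), y.ne_zero, by rw [← Units.val_pow_eq_pow_val, hy, Units.val_mk0]⟩

/-- Let `q` be an odd prime power, `F = GF(q)`, `K = GF(q²)`, and let
`α, γ ∈ K` be nonzero.  Define the quadratic form `LQ` on `K` regarded as a
`2`-dimensional `F`-vector space by `LQ(u) = Tr_{K/F}(αγu²) = αγu² + (αγu²)^q`.  Then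
`LQ` is of type `O⁺` (equivalently, there exists a nonzero `u ∈ K` with `LQ(u) = 0`) if
and only if either `(αγ)⁻²` lies in `GF(q)` but is not a square in `GF(q)`, or there is
no `s ∈ GF(q)*` with `(αγ)^{q+1} = −s²`; and `LQ` is of type `O⁻` (anisotropic) if and
only if `(αγ)⁻²` does not lie in `GF(q) ∖ GF(q)*²` and `(αγ)^{q+1} = −s²` for some
`s ∈ GF(q)*`.  (Here `GF(q)` is realised inside `K` as the set of elements fixed by
`x ↦ x^q`.) -/
theorem stmt_12 {K : Type*} [Field K] [Fintype K] (q : ℕ) (hq : Odd q)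
    (hcardK : Fintype.card K = q ^ 2)
    (α γ : K) (hα : α ≠ 0) (hγ : γ ≠ 0) :
    ((∃ u : K, u ≠ 0 ∧ α * γ * u ^ 2 + (α * γ * u ^ 2) ^ q = 0) ↔
      ((((α * γ)⁻¹ ^ 2) ^ q = (α * γ)⁻¹ ^ 2 ∧
          ¬ ∃ t : K, t ^ q = t ∧ t ^ 2 = (α * γ)⁻¹ ^ 2) ∨
        ¬ ∃ s : K, s ^ q = s ∧ s ≠ 0 ∧ (α * γ) ^ (q + 1) = -s ^ 2)) ∧
    ((∀ u : K, u ≠ 0 → α * γ * u ^ 2 + (α * γ * u ^ 2) ^ q ≠ 0) ↔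
      (¬ (((α * γ)⁻¹ ^ 2) ^ q = (α * γ)⁻¹ ^ 2 ∧
          ¬ ∃ t : K, t ^ q = t ∧ t ^ 2 = (α * γ)⁻¹ ^ 2) ∧
        ∃ s : K, s ^ q = s ∧ s ≠ 0 ∧ (α * γ) ^ (q + 1) = -s ^ 2)) := by
  classical
  obtain ⟨r, rfl⟩ := hq
  set β := α * γ with hβdef
  clear_value β
  have hβ : β ≠ 0 := hβdef ▸ mul_ne_zero hα hγ
  have hr1 : 1 ≤ r := by
    by_contra h
    have hr0 : r = 0 := by omega
    subst hr0
    have hlt := Fintype.one_lt_card (α := K)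
    simp at hcardK
    omega
  have hcard1 : Fintype.card K - 1 = 4*r*r + 4*r := by
    have h : (2*r+1)^2 = 4*r*r+4*r+1 := by ring
    rw [hcardK, h, Nat.add_sub_cancel]
  have hF1 : β ^ (4*r*r+4*r) = 1 := by
    have := FiniteField.pow_card_sub_one_eq_one β hβ
    rwa [hcard1] at this
  have hm1 : (-1 : K) ≠ 1 := by
    intro h
    have hchar : ringChar K = 2 := neg_one_eq_one_iff.mp h
    have heven := FiniteField.even_card_of_char_two hchar
    rw [hcardK] at heven
    have hodd : (2*r+1)^2 = 2*(2*r*r+2*r)+1 := by ring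
    omega
  -- nat arithmetic
  have hg1 : Nat.gcd (4*r*r+4*r) (4*r) = 4*r :=
    Nat.gcd_eq_right ⟨r+1, by ring⟩
  have hd1 : (4*r*r+4*r) / (4*r) = r+1 :=
    Nat.div_eq_of_eq_mul_left (by omega) (by ring)
  have hg2 : Nat.gcd (4*r*r+4*r) (4*r+4) = 4*r+4 :=
    Nat.gcd_eq_right ⟨r, by ring⟩
  have hd2 : (4*r*r+4*r) / (4*r+4) = r :=
    Nat.div_eq_of_eq_mul_left (by omega) (by ring)
  -- key1
  have key1 : (∃ u : K, u ≠ 0 ∧ β * u ^ 2 + (β * u ^ 2) ^ (2*r+1) = 0) ↔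
      β ^ (2*r*r+2*r) = (-1 : K) ^ (r+1) := by
    set c : K := -(β ^ (2*r))⁻¹ with hc
    have hb2 : (β ^ (2*r)) ≠ 0 := pow_ne_zero _ hβ
    have hc0 : c ≠ 0 := by
      rw [hc]
      simp [hβ]
    have step : ∀ u : K, u ≠ 0 →
        (β * u ^ 2 + (β * u ^ 2) ^ (2*r+1) = 0 ↔ u ^ (4*r) = c) := by
      intro u hu
      have hw : β * u ^ 2 ≠ 0 := mul_ne_zero hβ (pow_ne_zero _ hu)
      have hpow : (β * u ^ 2) ^ (2*r) = β ^ (2*r) * u ^ (4*r) := by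
        rw [mul_pow, ← pow_mul, show 2*(2*r) = 4*r by ring]
      have e : β * u ^ 2 + (β * u ^ 2) ^ (2*r+1)
          = (β * u ^ 2) * (1 + β ^ (2*r) * u ^ (4*r)) := by
        rw [pow_succ (β * u ^ 2) (2*r), hpow]
        ring
      rw [e, mul_eq_zero]
      constructor
      · rintro (h | h)
        · exact absurd h hw
        · have hprod : β ^ (2*r) * u ^ (4*r) = -1 := by linear_combination h
          rw [hc]
          apply mul_left_cancel₀ hb2
          rw [hprod, mul_neg, mul_inv_cancel₀ hb2]
      · intro h
        right
        rw [h, hc, mul_neg, mul_inv_cancel₀ hb2]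
        ring
    have estep : (∃ u : K, u ≠ 0 ∧ β * u ^ 2 + (β * u ^ 2) ^ (2*r+1) = 0) ↔
        ∃ u : K, u ≠ 0 ∧ u ^ (4*r) = c :=
      exists_congr fun u => and_congr_right fun hu => step u hu
    rw [estep, field_pow_image' _ hc0, hcard1, hg1, hd1]
    have hcp : c ^ (r+1) * β ^ (2*r*r+2*r) = (-1 : K) ^ (r+1) := by
      rw [hc, show -(β ^ (2*r))⁻¹ = (-1) * (β ^ (2*r))⁻¹ by ring, mul_pow, inv_pow, ← pow_mul,
        show (2*r)*(r+1) = 2*r*r+2*r by ring]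
      field_simp
    constructor
    · intro h
      rw [h, one_mul] at hcp
      exact hcp
    · intro h
      rw [h] at hcp
      rcases mul_left_eq_self₀.mp hcp with h1 | h1
      · exact h1
      · exact absurd h1 (pow_ne_zero _ (neg_ne_zero.mpr one_ne_zero))
  -- keyA
  have keyA : ((β⁻¹ ^ 2) ^ (2*r+1) = β⁻¹ ^ 2 ∧
      ¬ ∃ t : K, t ^ (2*r+1) = t ∧ t ^ 2 = β⁻¹ ^ 2) ↔ β ^ (2*r) = -1 := by
    have hx0 : β⁻¹ ^ 2 ≠ 0 := pow_ne_zero _ (inv_ne_zero hβ)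
    have hxpow : (β⁻¹ ^ 2) ^ (2*r) = (β ^ (4*r))⁻¹ := by
      rw [← pow_mul, inv_pow, show 2*(2*r) = 4*r by ring]
    constructor
    · rintro ⟨h1, h2⟩
      have hx2r : (β⁻¹ ^ 2) ^ (2*r) = 1 := by
        have hstep : (β⁻¹ ^ 2) ^ (2*r) * (β⁻¹ ^ 2) = (β⁻¹ ^ 2) := by
          rw [← pow_succ]; exact h1
        exact (mul_left_eq_self₀.mp hstep).resolve_right hx0
      have h4 : β ^ (4*r) = 1 := by
        rw [hxpow, inv_eq_one] at hx2r
        exact hx2r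
      have hsq : β ^ (2*r) * β ^ (2*r) = 1 := by
        rw [← pow_add, show 2*r+2*r = 4*r by ring]
        exact h4
      rcases mul_self_eq_one_iff.mp hsq with h | h
      · exfalso
        apply h2
        refine ⟨β⁻¹, ?_, rfl⟩
        rw [show β⁻¹ ^ (2*r+1) = (β ^ (2*r+1))⁻¹ by rw [inv_pow], pow_succ, h, one_mul]
      · exact h
    · intro h
      have h4 : β ^ (4*r) = 1 := by
        rw [show 4*r = 2*r*2 by ring, pow_mul, h, neg_one_sq]
      constructor
      · rw [pow_succ, hxpow, h4, inv_one, one_mul]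
      · rintro ⟨t, ht1, ht2⟩
        have ht0 : t ≠ 0 := by
          rintro rfl
          rw [zero_pow (by norm_num)] at ht2
          exact hx0 ht2.symm
        have ht2r : t ^ (2*r) = 1 := by
          have hstep : t ^ (2*r) * t = t := by rw [← pow_succ]; exact ht1
          exact (mul_left_eq_self₀.mp hstep).resolve_right ht0
        have e1 : (β⁻¹ ^ 2) ^ r = (t ^ 2) ^ r := by rw [ht2]
        have l : (β⁻¹ ^ 2) ^ r = -1 := by
          rw [← pow_mul, inv_pow, show 2*r = 2*r by rfl, h, inv_neg, inv_one]
        have rr : (t ^ 2) ^ r = 1 := by rw [← pow_mul]; exact ht2r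
        rw [l, rr] at e1
        exact hm1 e1
  -- A implies C
  have AimpC : β ^ (2*r) = -1 → β ^ (2*r*r+2*r) = (-1 : K) ^ (r+1) := by
    intro h
    rw [show 2*r*r+2*r = (2*r)*(r+1) by ring, pow_mul, h]
  -- keyB
  have keyB : (∃ s : K, s ^ (2*r+1) = s ∧ s ≠ 0 ∧ β ^ (2*r+1+1) = -s ^ 2) ↔
      β ^ (2*r*r+2*r) = (-1 : K) ^ r := by
    constructor
    · rintro ⟨s, hs1, hs0, hs2⟩
      have hs2r : s ^ (2*r) = 1 := by
        have hstep : s ^ (2*r) * s = s := by rw [← pow_succ]; exact hs1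
        exact (mul_left_eq_self₀.mp hstep).resolve_right hs0
      rw [show 2*r*r+2*r = (2*r+1+1)*r by ring, pow_mul, hs2,
        show -s ^ 2 = (-1) * s ^ 2 by ring, mul_pow, ← pow_mul,
        show 2*r = 2*r by rfl, mul_comm 2 r, show r*2 = 2*r by ring]
      rw [hs2r, mul_one]
    · intro h
      set x : K := -β ^ (2*r+1+1) with hx
      have hx0 : x ≠ 0 := by
        rw [hx]
        simp [hβ]
      have hxr : x ^ r = 1 := by
        rw [hx, show -β ^ (2*r+1+1) = (-1) * β ^ (2*r+1+1) by ring, mul_pow, ← pow_mul,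
          show (2*r+1+1)*r = 2*r*r+2*r by ring, h, ← mul_pow]
        norm_num
      obtain ⟨y, hy0, hy⟩ : ∃ y : K, y ≠ 0 ∧ y ^ (4*r+4) = x := by
        rw [field_pow_image' _ hx0, hcard1, hg2, hd2]
        exact hxr
      have hferm : y ^ (4*r*r+4*r) = 1 := by
        have := FiniteField.pow_card_sub_one_eq_one y hy0
        rwa [hcard1] at this
      refine ⟨y ^ (2*r+2), ?_, pow_ne_zero _ hy0, ?_⟩
      · calc (y ^ (2*r+2)) ^ (2*r+1) = y ^ (4*r*r+4*r) * y ^ (2*r+2) := by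
              rw [← pow_mul, ← pow_add]
              ring_nf
          _ = y ^ (2*r+2) := by rw [hferm, one_mul]
      · have hsq : (y ^ (2*r+2)) ^ 2 = x := by
          rw [← pow_mul, show (2*r+2)*2 = 4*r+4 by ring, hy]
        rw [hsq, hx, neg_neg]
  -- dichotomy
  have hD : β ^ (2*r*r+2*r) = (-1 : K) ^ r ∨ β ^ (2*r*r+2*r) = (-1 : K) ^ (r+1) := by
    have h2 : β ^ (2*r*r+2*r) * β ^ (2*r*r+2*r) = 1 := by
      rw [← pow_add, show 2*r*r+2*r+(2*r*r+2*r) = 4*r*r+4*r by ring]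
      exact hF1
    rcases mul_self_eq_one_iff.mp h2 with h | h
    · rcases Nat.even_or_odd r with he | ho
      · left; rw [h, Even.neg_one_pow he]
      · right; rw [h, Even.neg_one_pow (Odd.add_one ho)]
    · rcases Nat.even_or_odd r with he | ho
      · right; rw [h, pow_succ, Even.neg_one_pow he, one_mul]
      · left; rw [h, Odd.neg_one_pow ho]
  have hne : ((-1 : K)) ^ r ≠ (-1 : K) ^ (r+1) := by
    intro h
    rw [pow_succ] at h
    have h0 : ((-1 : K)) ^ r ≠ 0 := pow_ne_zero _ (neg_ne_zero.mpr one_ne_zero)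
    have h1 : (1 : K) = -1 := mul_left_cancel₀ h0 (by rw [mul_one]; exact h)
    exact hm1 h1.symm
  -- assemble
  have first : (∃ u : K, u ≠ 0 ∧ β * u ^ 2 + (β * u ^ 2) ^ (2*r+1) = 0) ↔
      (((β⁻¹ ^ 2) ^ (2*r+1) = β⁻¹ ^ 2 ∧
          ¬ ∃ t : K, t ^ (2*r+1) = t ∧ t ^ 2 = β⁻¹ ^ 2) ∨
        ¬ ∃ s : K, s ^ (2*r+1) = s ∧ s ≠ 0 ∧ β ^ (2*r+1+1) = -s ^ 2) := by
    rw [key1]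
    constructor
    · intro hC
      right
      intro hs
      exact hne ((keyB.mp hs).symm.trans hC)
    · rintro (hA | hB)
      · exact AimpC (keyA.mp hA)
      · rcases hD with h | h
        · exact absurd (keyB.mpr h) hB
        · exact h
  refine ⟨first, ?_⟩
  have e1 : (∀ u : K, u ≠ 0 → β * u ^ 2 + (β * u ^ 2) ^ (2*r+1) ≠ 0) ↔
      ¬ (∃ u : K, u ≠ 0 ∧ β * u ^ 2 + (β * u ^ 2) ^ (2*r+1) = 0) := by
    constructor
    · rintro h ⟨u, hu, he⟩; exact h u hu he
    · intro h u hu he; exact h ⟨u, hu, he⟩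
  rw [e1, first, not_or, not_not]
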